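/- arXiv:2011.07382 — 4 statements merged into one kernel-verified Lean document; each statement's English description precedes it below -/
import Mathlib

section
/- Let V be a finite-dimensional real vector space, B a nondegenerate bilinear form on V, and T : V →ₗ[ℝ] V →ₗ[ℝ] ℝ an arbitrary bilinear form. If b, c : Basis (Fin n) ℝ V are two bases of V and b', c' : Fin n → V are reciprocal families for b and c respectively, then ∑_{i} T (b i) (b' i) = ∑_{i} T (c i) (c' i). In other words, the super contraction sc(T) = ∑_i T(e_i, e^i) is well defined, independent of the choice of basis. -/
/-- **Well-definedness of the super contraction.** Let `V` be a finite-dimensional real vector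
space, `B` a nondegenerate bilinear form on `V`, and `T` an arbitrary bilinear form. If `b, c`
are two bases of `V` with reciprocal families `b', c'` (i.e. `B (b' j) (b i) = δᵢⱼ` and
`B (c' j) (c i) = δᵢⱼ`), then `∑ i, T (b i) (b' i) = ∑ i, T (c i) (c' i)`. -/
theorem superContraction_wellDefined
    {V : Type*} [AddCommGroup V] [Module ℝ V] [FiniteDimensional ℝ V]
    (B : V →ₗ[ℝ] V →ₗ[ℝ] ℝ) (hB : LinearMap.BilinForm.Nondegenerate B)
    (T : V →ₗ[ℝ] V →ₗ[ℝ] ℝ) {n : ℕ}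
    (b c : Module.Basis (Fin n) ℝ V) (b' c' : Fin n → V)
    (hb' : ∀ i j, B (b' j) (b i) = if i = j then (1 : ℝ) else 0)
    (hc' : ∀ i j, B (c' j) (c i) = if i = j then (1 : ℝ) else 0) :
    ∑ i : Fin n, T (b i) (b' i) = ∑ i : Fin n, T (c i) (c' i) := by
  -- c-coordinate expansion: every v equals ∑ k, B (c' k) v • c k
  have hexp : ∀ v : V, v = ∑ k : Fin n, B (c' k) v • c k := by
    intro v
    conv_lhs => rw [← c.sum_repr v]
    refine Finset.sum_congr rfl fun k _ => ?_
    congr 1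
    conv_rhs => rw [← c.sum_repr v]
    simp only [map_sum, map_smul, hc', smul_eq_mul]
    simp
  -- reconstruction: ∑ i, B v (b i) • b' i = v
  have hrec : ∀ v : V, ∑ i : Fin n, B v (b i) • b' i = v := by
    intro v
    have h0 : ∀ j, B (∑ i : Fin n, B v (b i) • b' i - v) (b j) = 0 := by
      intro j
      simp only [map_sub, map_sum, map_smul, LinearMap.sub_apply, LinearMap.sum_apply,
        LinearMap.smul_apply, hb', smul_eq_mul]
      simp
    have := hB.1 (∑ i : Fin n, B v (b i) • b' i - v) ?_
    · exact sub_eq_zero.mp this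
    · intro w
      rw [← b.sum_repr w]
      simp only [map_sum, map_smul, smul_eq_mul]
      refine Finset.sum_eq_zero fun k _ => ?_
      rw [h0 k, mul_zero]
  calc ∑ i : Fin n, T (b i) (b' i)
      = ∑ i : Fin n, T (∑ k : Fin n, B (c' k) (b i) • c k) (b' i) := by
        refine Finset.sum_congr rfl fun i _ => ?_
        rw [← hexp (b i)]
    _ = ∑ k : Fin n, T (c k) (∑ i : Fin n, B (c' k) (b i) • b' i) := by
        simp only [map_sum, map_smul, LinearMap.sum_apply, LinearMap.smul_apply]
        rw [Finset.sum_comm]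
    _ = ∑ k : Fin n, T (c k) (c' k) := by
        refine Finset.sum_congr rfl fun k _ => ?_
        rw [hrec (c' k)]
end

section
/- Let V be a finite-dimensional real vector space, B a nondegenerate alternating (symplectic) bilinear form on V, b : Basis (Fin n) ℝ V a basis, and b' : Fin n → V a reciprocal family for b. If T : V →ₗ[ℝ] V →ₗ[ℝ] ℝ is a symmetric bilinear form (T x y = T y x for all x, y ∈ V), then ∑_{i} T (b i) (b' i) = 0. -/
/-- If `B` is a nondegenerate alternating (symplectic) bilinear form on a finite-dimensional
real vector space `V`, `b` a basis with reciprocal family `b'`, and `T` is a symmetric bilinear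
form (`T x y = T y x`), then the super contraction `∑ i, T (b i) (b' i)` vanishes. -/
theorem superContraction_eq_zero_of_symm
    {V : Type*} [AddCommGroup V] [Module ℝ V] [FiniteDimensional ℝ V]
    (B : V →ₗ[ℝ] V →ₗ[ℝ] ℝ) (hB : ∀ m : V, (∀ n : V, B m n = 0) → m = 0)
    (hBalt : LinearMap.BilinForm.IsAlt B) {n : ℕ}
    (b : Module.Basis (Fin n) ℝ V) (b' : Fin n → V)
    (hb' : ∀ i j, B (b' j) (b i) = if i = j then (1 : ℝ) else 0)
    (T : V →ₗ[ℝ] V →ₗ[ℝ] ℝ) (hT : ∀ x y : V, T x y = T y x) :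
    ∑ i : Fin n, T (b i) (b' i) = 0 := by
  have key : ∀ i j, B (b' j) (b' i) = b.repr (b' i) j := by
    intro i j
    conv_lhs => rw [← b.sum_repr (b' i)]
    simp [hb', Finset.sum_ite_eq, -Module.Basis.sum_repr]
  have hS : ∑ i : Fin n, T (b i) (b' i)
      = ∑ i : Fin n, ∑ j : Fin n, B (b' j) (b' i) * T (b i) (b j) := by
    refine Finset.sum_congr rfl fun i _ => ?_
    conv_lhs => rw [← b.sum_repr (b' i)]
    simp [key, mul_comm, -Module.Basis.sum_repr]
  have hS' : ∑ i : Fin n, T (b i) (b' i)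
      = - ∑ i : Fin n, T (b i) (b' i) := by
    conv_lhs => rw [hS]
    rw [Finset.sum_comm]
    rw [hS, ← Finset.sum_neg_distrib]
    refine Finset.sum_congr rfl fun j _ => ?_
    rw [← Finset.sum_neg_distrib]
    refine Finset.sum_congr rfl fun i _ => ?_
    rw [← hBalt.neg_eq (b' i) (b' j), hT (b j) (b i)]
    ring
  linarith
end

section
/- Let B be a super inner product on the super vector space V = V₀ × V₁, let e : Basis (Fin n) ℝ V be a homogeneous basis, and let e' : Fin n → V be a reciprocal family for e with respect to B. Suppose T : V →ₗ[ℝ] V →ₗ[ℝ] ℝ is even (T x y = 0 whenever one of x, y lies in V₀ × {0} and the other lies in {0} × V₁) and super alternating (T x y = - T y x for all x, y ∈ V₀ × {0}, and T x y = T y x for all x, y ∈ {0} × V₁). Then the super contraction of T vanishes: ∑_{i} T (e i) (e' i) = 0. -/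
open Matrix


/-- **Vanishing of the super contraction of an even super alternating bilinear form.**
Let `B` be a super inner product on the super vector space `V = V₀ × V₁` (so
`B (x₀,x₁) (y₀,y₁) = B₀ x₀ y₀ + B₁ x₁ y₁` with `B₀` nondegenerate symmetric and `B₁`
nondegenerate alternating), `e` a homogeneous basis with reciprocal family `e'`.
If `T` is even and super alternating, then `∑ i, T (e i) (e' i) = 0`. -/
theorem superContraction_eq_zero_of_superAlt
    {V₀ V₁ : Type*} [AddCommGroup V₀] [Module ℝ V₀] [FiniteDimensional ℝ V₀]
    [AddCommGroup V₁] [Module ℝ V₁] [FiniteDimensional ℝ V₁]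
    (B₀ : V₀ →ₗ[ℝ] V₀ →ₗ[ℝ] ℝ) (hB₀ : LinearMap.BilinForm.Nondegenerate B₀)
    (hB₀symm : LinearMap.BilinForm.IsSymm B₀)
    (B₁ : V₁ →ₗ[ℝ] V₁ →ₗ[ℝ] ℝ) (hB₁ : LinearMap.BilinForm.Nondegenerate B₁)
    (hB₁alt : LinearMap.BilinForm.IsAlt B₁)
    (B : (V₀ × V₁) →ₗ[ℝ] (V₀ × V₁) →ₗ[ℝ] ℝ)
    (hBdef : ∀ x y : V₀ × V₁, B x y = B₀ x.1 y.1 + B₁ x.2 y.2)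
    {n : ℕ} (e : Module.Basis (Fin n) ℝ (V₀ × V₁))
    (he : ∀ i, (e i).2 = 0 ∨ (e i).1 = 0)
    (e' : Fin n → V₀ × V₁)
    (he' : ∀ i j, B (e' j) (e i) = if i = j then (1 : ℝ) else 0)
    (T : (V₀ × V₁) →ₗ[ℝ] (V₀ × V₁) →ₗ[ℝ] ℝ)
    (hTeven₁ : ∀ x y : V₀ × V₁, x.2 = 0 → y.1 = 0 → T x y = 0)
    (hTeven₂ : ∀ x y : V₀ × V₁, x.1 = 0 → y.2 = 0 → T x y = 0)
    (hTalt : ∀ x y : V₀ × V₁, x.2 = 0 → y.2 = 0 → T x y = - T y x)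
    (hTsymm : ∀ x y : V₀ × V₁, x.1 = 0 → y.1 = 0 → T x y = T y x) :
    ∑ i : Fin n, T (e i) (e' i) = 0 := by
  classical
  -- sign function: +1 on even basis vectors, -1 on odd ones
  set s : Fin n → ℝ := fun i => if (e i).2 = 0 then 1 else -1 with hs
  have hs2 : ∀ i, s i * s i = 1 := by
    intro i; simp only [hs]; split <;> norm_num
  -- Gram matrix of B in the basis e, and coefficient matrix of e'
  set G : Matrix (Fin n) (Fin n) ℝ := Matrix.of (fun k i => B (e k) (e i)) with hG
  set C : Matrix (Fin n) (Fin n) ℝ := Matrix.of (fun j k => e.repr (e' j) k) with hC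
  have hB₀' : ∀ x y, B₀ x y = B₀ y x := fun x y => LinearMap.BilinForm.isSymm_def.mp hB₀symm x y
  have hB₁' : ∀ x y, B₁ x y = -B₁ y x := fun x y => (LinearMap.IsAlt.neg hB₁alt y x).symm
  -- sign symmetry of the Gram matrix: G k i = G i k * s k
  have hGT : ∀ k i, G k i = G i k * s k := by
    intro k i
    simp only [hG, hs, Matrix.of_apply, hBdef]
    rcases he k with hk | hk
    · rw [if_pos hk, hk]
      rcases he i with hi | hi
      · rw [hi]; simp [hB₀' (e k).1 (e i).1]
      · rw [hi]; simp
    · by_cases h2 : (e k).2 = 0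
      · rw [if_pos h2, hk, h2]; simp
      · rw [if_neg h2, hk]
        rcases he i with hi | hi
        · rw [hi]; simp
        · rw [hi]; simp [hB₁' (e k).2 (e i).2]
  -- C * G = 1
  have hCG : C * G = 1 := by
    ext j i
    have hexp : B (e' j) (e i) = ∑ k, e.repr (e' j) k * B (e k) (e i) := by
      conv_lhs => rw [← e.sum_repr (e' j)]
      rw [map_sum, LinearMap.sum_apply]
      simp [smul_eq_mul]
    rw [Matrix.mul_apply, Matrix.one_apply]
    simp only [hC, hG, Matrix.of_apply]
    rw [← hexp, he' i j]
    by_cases h : i = j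
    · simp [h]
    · simp [h, Ne.symm h]
  have hGC : G * C = 1 := mul_eq_one_comm.mp hCG
  have hGD : G * Matrix.diagonal s = Gᵀ := by
    ext i k
    rw [Matrix.mul_diagonal, Matrix.transpose_apply, hGT k i]
  have h3 : G * (Matrix.diagonal s * Cᵀ) = 1 := by
    rw [← Matrix.mul_assoc, hGD, ← Matrix.transpose_mul, hCG, Matrix.transpose_one]
  have hCD : Matrix.diagonal s * Cᵀ = C := by
    calc Matrix.diagonal s * Cᵀ = (C * G) * (Matrix.diagonal s * Cᵀ) := by
          rw [hCG, Matrix.one_mul]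
      _ = C * (G * (Matrix.diagonal s * Cᵀ)) := by rw [Matrix.mul_assoc]
      _ = C := by rw [h3, Matrix.mul_one]
  -- entrywise sign symmetry of C
  have hCs : ∀ i k, C i k = s i * C k i := by
    intro i k
    have h := congrFun (congrFun hCD i) k
    rw [Matrix.diagonal_mul, Matrix.transpose_apply] at h
    exact h.symm
  -- sign antisymmetry of the matrix of T
  have hM : ∀ i k, T (e k) (e i) = -(s k * T (e i) (e k)) := by
    intro i k
    simp only [hs]
    rcases he k with hk | hk
    · rw [if_pos hk]
      rcases he i with hi | hi
      · rw [one_mul]; exact hTalt _ _ hk hi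
      · rw [hTeven₁ _ _ hk hi, hTeven₂ _ _ hi hk]; ring
    · by_cases h2 : (e k).2 = 0
      · rw [if_pos h2]
        rcases he i with hi | hi
        · rw [one_mul]; exact hTalt _ _ h2 hi
        · rw [hTeven₁ _ _ h2 hi, hTeven₂ _ _ hi h2]; ring
      · rw [if_neg h2]
        rcases he i with hi | hi
        · rw [hTeven₂ _ _ hk hi, hTeven₁ _ _ hi hk]; ring
        · rw [hTsymm _ _ hk hi]; ring
  -- expand the contraction
  have hS : ∀ j, T (e j) (e' j) = ∑ k, C j k * T (e j) (e k) := by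
    intro j
    conv_lhs => rw [← e.sum_repr (e' j)]
    rw [map_sum]
    simp [hC, smul_eq_mul]
  have key : ∀ i k, C k i * T (e k) (e i) = -(C i k * T (e i) (e k)) := by
    intro i k
    rw [hCs k i, hM i k]
    have h : s k * C i k * -(s k * T (e i) (e k))
        = -(s k * s k * (C i k * T (e i) (e k))) := by ring
    rw [h, hs2 k, one_mul]
  have hneg : (∑ i, ∑ k, C i k * T (e i) (e k))
      = -(∑ i, ∑ k, C i k * T (e i) (e k)) := by
    conv_lhs => rw [Finset.sum_comm]
    calc (∑ i, ∑ k, C k i * T (e k) (e i))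
        = ∑ i, ∑ k, -(C i k * T (e i) (e k)) := by
          refine Finset.sum_congr rfl fun i _ => Finset.sum_congr rfl fun k _ => key i k
      _ = -(∑ i, ∑ k, C i k * T (e i) (e k)) := by
          simp [Finset.sum_neg_distrib]
  have hzero : (∑ i, ∑ k, C i k * T (e i) (e k)) = 0 := by linarith
  calc ∑ i : Fin n, T (e i) (e' i) = ∑ i, ∑ k, C i k * T (e i) (e k) :=
        Finset.sum_congr rfl fun i _ => hS i
    _ = 0 := hzero
end

section
/- Let B be a super inner product on the super vector space V = V₀ × V₁, let e : Basis (Fin n) ℝ V be a homogeneous basis, and let e' : Fin n → V be a reciprocal family for e with respect to B. Then the family j ↦ (-1)^{p j} • (e j), where p j = 0 if e j ∈ V₀ × {0} and p j = 1 if e j ∈ {0} × V₁, is a reciprocal family for e' with respect to B. In other words, the reciprocal base of the reciprocal base {e^i} of a homogeneous base {e_i} is {(-1)^{|e_i|} e_i}. -/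
/-- **The reciprocal of the reciprocal base.** Let `B` be a super inner product on the super
vector space `V = V₀ × V₁`, `e` a homogeneous basis with parities `p` (so `p j = 0` when
`e j ∈ V₀ × {0}` and `p j = 1` when `e j ∈ {0} × V₁`), and `e'` a reciprocal family for `e`.
Then `j ↦ (-1) ^ (p j) • e j` is a reciprocal family for `e'`. -/
theorem reciprocal_of_reciprocal_super
    {V₀ V₁ : Type*} [AddCommGroup V₀] [Module ℝ V₀] [FiniteDimensional ℝ V₀]
    [AddCommGroup V₁] [Module ℝ V₁] [FiniteDimensional ℝ V₁]
    (B₀ : V₀ →ₗ[ℝ] V₀ →ₗ[ℝ] ℝ) (hB₀ : LinearMap.BilinForm.Nondegenerate B₀)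
    (hB₀symm : LinearMap.BilinForm.IsSymm B₀)
    (B₁ : V₁ →ₗ[ℝ] V₁ →ₗ[ℝ] ℝ) (hB₁ : LinearMap.BilinForm.Nondegenerate B₁)
    (hB₁alt : LinearMap.BilinForm.IsAlt B₁)
    (B : (V₀ × V₁) →ₗ[ℝ] (V₀ × V₁) →ₗ[ℝ] ℝ)
    (hBdef : ∀ x y : V₀ × V₁, B x y = B₀ x.1 y.1 + B₁ x.2 y.2)
    {n : ℕ} (e : Module.Basis (Fin n) ℝ (V₀ × V₁)) (p : Fin n → ℕ)
    (hp : ∀ j, ((e j).2 = 0 ∧ p j = 0) ∨ ((e j).1 = 0 ∧ p j = 1))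
    (e' : Fin n → V₀ × V₁)
    (he' : ∀ i j, B (e' j) (e i) = if i = j then (1 : ℝ) else 0) :
    ∀ i j, B (((-1 : ℝ) ^ p j) • e j) (e' i) = if i = j then (1 : ℝ) else 0 := by
  intro i j
  have h := he' j i
  rw [hBdef] at h
  rw [map_smul, LinearMap.smul_apply, hBdef, smul_eq_mul]
  rcases hp j with ⟨h2, hp0⟩ | ⟨h1, hp1⟩
  · rw [h2, map_zero] at h ⊢
    simp only [LinearMap.zero_apply, add_zero] at h ⊢
    rw [hp0, pow_zero, one_mul, ← hB₀symm.eq (e' i).1 (e j).1, h]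
    exact if_congr eq_comm rfl rfl
  · rw [h1, map_zero] at h ⊢
    simp only [LinearMap.zero_apply, zero_add] at h ⊢
    have halt := LinearMap.IsAlt.neg hB₁alt (e j).2 (e' i).2
    rw [hp1, pow_one, neg_one_mul, halt, h]
    exact if_congr eq_comm rfl rfl
end
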